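/- Let r > 0 and let n ≥ 7 be an integer, and set D = r / sin(π/n). Define p_k = (D·cos(2πk/n), D·sin(2πk/n)) for k = 0, …, n−1. Then: (i) for all j ≠ k, ‖p_j − p_k‖ ≥ 2r, with ‖p_{k+1} − p_k‖ = 2r for adjacent indices; (ii) ‖p_k‖ = D > 2r for every k; and (iii) the union of the closed disk of radius r centered at the origin with the closed disks of radius r centered at the points p_k is not a connected subset of ℝ². -/

import Mathlib

open Real Metric

noncomputable def pt (a b : ℝ) : EuclideanSpace ℝ (Fin 2) := WithLp.toLp 2 ![a, b]

noncomputable def ringPt (D : ℝ) (n k : ℕ) : EuclideanSpace ℝ (Fin 2) :=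
  pt (D * Real.cos (2 * π * k / n)) (D * Real.sin (2 * π * k / n))

lemma norm_pt_sub (a b c d : ℝ) :
    ‖pt a b - pt c d‖ = Real.sqrt ((a - c) ^ 2 + (b - d) ^ 2) := by
  rw [EuclideanSpace.norm_eq]
  congr 1
  rw [Fin.sum_univ_two]
  simp [pt]

lemma norm_ringPt (D : ℝ) (hD : 0 ≤ D) (n k : ℕ) : ‖ringPt D n k‖ = D := by
  have h0 : (0 : EuclideanSpace ℝ (Fin 2)) = pt 0 0 := by
    ext i; fin_cases i <;> simp [pt]
  rw [show ringPt D n k = ringPt D n k - 0 by simp, h0, ringPt, norm_pt_sub]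
  have : (D * Real.cos (2 * π * k / n) - 0) ^ 2 + (D * Real.sin (2 * π * k / n) - 0) ^ 2
      = D ^ 2 := by
    have := Real.sin_sq_add_cos_sq (2 * π * k / n)
    nlinarith
  rw [this, Real.sqrt_sq hD]

lemma ringPt_sub_norm (D : ℝ) (hD : 0 ≤ D) (n j k : ℕ) :
    ‖ringPt D n j - ringPt D n k‖ = 2 * D * |Real.sin (π * ((j : ℝ) - k) / n)| := by
  rw [ringPt, ringPt, norm_pt_sub]
  set θ : ℝ := 2 * π * j / n
  set φ : ℝ := 2 * π * k / n
  have hcos : Real.cos (θ - φ) = Real.cos θ * Real.cos φ + Real.sin θ * Real.sin φ :=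
    Real.cos_sub θ φ
  have hhalf : Real.sin ((θ - φ) / 2) ^ 2 = 1 / 2 - Real.cos (2 * ((θ - φ) / 2)) / 2 :=
    Real.sin_sq_eq_half_sub _
  have h2 : (2 : ℝ) * ((θ - φ) / 2) = θ - φ := by ring
  rw [h2] at hhalf
  have hangle : (θ - φ) / 2 = π * ((j : ℝ) - k) / n := by
    simp only [θ, φ]
    ring
  have key : (D * Real.cos θ - D * Real.cos φ) ^ 2 + (D * Real.sin θ - D * Real.sin φ) ^ 2
      = (2 * D * |Real.sin (π * ((j : ℝ) - k) / n)|) ^ 2 := by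
    rw [← hangle]
    have habs : |Real.sin ((θ - φ) / 2)| ^ 2 = Real.sin ((θ - φ) / 2) ^ 2 := sq_abs _
    have hc2 : Real.cos θ ^ 2 + Real.sin θ ^ 2 = 1 := by
      have := Real.sin_sq_add_cos_sq θ; linarith
    have hc3 : Real.cos φ ^ 2 + Real.sin φ ^ 2 = 1 := by
      have := Real.sin_sq_add_cos_sq φ; linarith
    linear_combination D^2*hc2 + D^2*hc3 + 2*D^2*hcos - 4*D^2*habs - 4*D^2*hhalf
  rw [key, Real.sqrt_sq (by positivity)]

lemma sin_pi_div_le (n m : ℕ) (hn : 2 ≤ n) (h1 : 1 ≤ m) (h2 : m ≤ n - 1) :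
    Real.sin (π / n) ≤ Real.sin (π * m / n) := by
  have hnR : (2 : ℝ) ≤ n := by exact_mod_cast hn
  have hn0 : (0 : ℝ) < n := by linarith
  have hmR : (1 : ℝ) ≤ m := by exact_mod_cast h1
  have hm2 : (m : ℝ) ≤ (n : ℝ) - 1 := by
    have : (m : ℝ) ≤ ((n - 1 : ℕ) : ℝ) := by exact_mod_cast h2
    rwa [Nat.cast_sub (by omega), Nat.cast_one] at this
  have hpi : 0 < π := Real.pi_pos
  have hx : (0:ℝ) ≤ π / n := by positivity
  have hlow : π / n ≤ π * m / n := by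
    have h := le_mul_of_one_le_left hx hmR
    calc π / n ≤ m * (π / n) := h
      _ = π * m / n := by ring
  rcases le_or_gt (π * m / n) (π / 2) with hle | hgt
  · exact Real.sin_le_sin_of_le_of_le_pi_div_two (by linarith) hle hlow
  · have : Real.sin (π * m / n) = Real.sin (π - π * m / n) := (Real.sin_pi_sub _).symm
    rw [this]
    apply Real.sin_le_sin_of_le_of_le_pi_div_two (by linarith) (by linarith)
    rw [le_sub_iff_add_le, ← add_div, div_le_iff₀ hn0]
    nlinarith

theorem bot_in_the_middle_not_aggregated (r : ℝ) (hr : 0 < r) (n : ℕ) (hn : 7 ≤ n) :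
    (∀ j k : ℕ, j < n → k < n → j ≠ k →
      ‖ringPt (r / Real.sin (π / n)) n j - ringPt (r / Real.sin (π / n)) n k‖ ≥ 2 * r) ∧
    (∀ k : ℕ, k < n →
      ‖ringPt (r / Real.sin (π / n)) n (k + 1) - ringPt (r / Real.sin (π / n)) n k‖ = 2 * r) ∧
    (∀ k : ℕ, k < n → ‖ringPt (r / Real.sin (π / n)) n k‖ = r / Real.sin (π / n)) ∧
    r / Real.sin (π / n) > 2 * r ∧
    ¬ IsConnected
      (closedBall (0 : EuclideanSpace ℝ (Fin 2)) r ∪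
        ⋃ k : Fin n, closedBall (ringPt (r / Real.sin (π / n)) n k) r) := by
  have hpi := Real.pi_pos
  have hn0 : (0 : ℝ) < n := by
    have : (7 : ℝ) ≤ n := by exact_mod_cast hn
    linarith
  have hn7 : (7 : ℝ) ≤ n := by exact_mod_cast hn
  set s := Real.sin (π / n) with hs_def
  have hpn0 : (0 : ℝ) ≤ π / n := by positivity
  have hs : 0 < s := Real.sin_pos_of_pos_of_lt_pi (by positivity)
    (div_lt_self hpi (by linarith))
  have hshalf : s < 1 / 2 := by
    have h6 : π / n < π / 6 := by
      apply div_lt_div_of_pos_left hpi (by norm_num)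
      linarith
    have hub : π / n ≤ π / 2 := by
      rw [div_le_div_iff₀ hn0 (by norm_num : (0:ℝ) < 2)]
      nlinarith
    have hub6 : π / 6 ≤ π / 2 := by
      rw [div_le_div_iff₀ (by norm_num : (0:ℝ) < 6) (by norm_num : (0:ℝ) < 2)]
      nlinarith
    have hmono := Real.strictMonoOn_sin (Set.mem_Icc.2 ⟨by linarith, hub⟩)
      (Set.mem_Icc.2 ⟨by linarith, hub6⟩) h6
    rw [Real.sin_pi_div_six] at hmono
    exact hmono
  set D := r / s with hD_def
  have hD : 0 < D := div_pos hr hs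
  have hDs : D * s = r := div_mul_cancel₀ r (ne_of_gt hs)
  have hD2r : 2 * r < D := by
    rw [hD_def, lt_div_iff₀ hs]
    nlinarith
  have main : ∀ a b : ℕ, a < b → b < n → 2 * r ≤ ‖ringPt D n a - ringPt D n b‖ := by
    intro a b hab hbn
    rw [ringPt_sub_norm D hD.le]
    set m := b - a with hm_def
    have hcast : (a : ℝ) - b = -((m : ℕ) : ℝ) := by
      rw [hm_def, Nat.cast_sub hab.le]
      ring
    rw [hcast]
    have hneg : π * (-((m : ℕ) : ℝ)) / n = -(π * m / n) := by ring
    rw [hneg, Real.sin_neg, abs_neg]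
    have hm1 : 1 ≤ m := by omega
    have hm2 : m ≤ n - 1 := by omega
    have hsin := sin_pi_div_le n m (by omega) hm1 hm2
    have hmn : (m : ℝ) ≤ n := by exact_mod_cast (by omega : m ≤ n)
    have hnonneg : 0 ≤ Real.sin (π * m / n) := by
      apply Real.sin_nonneg_of_nonneg_of_le_pi (by positivity)
      rw [div_le_iff₀ hn0]
      nlinarith
    rw [abs_of_nonneg hnonneg]
    nlinarith
  refine ⟨?_, ?_, ?_, hD2r, ?_⟩
  · intro j k hj hk hjk
    rcases lt_or_gt_of_ne hjk with h | h
    · exact main j k h hk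
    · rw [norm_sub_rev]
      exact main k j h hj
  · intro k hk
    rw [ringPt_sub_norm D hD.le]
    have hcast : ((k + 1 : ℕ) : ℝ) - (k : ℝ) = 1 := by push_cast; ring
    rw [hcast]
    have : π * (1 : ℝ) / n = π / n := by ring
    rw [this, ← hs_def, abs_of_pos hs]
    nlinarith
  · intro k hk
    exact norm_ringPt D hD.le n k
  · intro hC
    set E := EuclideanSpace ℝ (Fin 2)
    set u : Set E := ball (0 : E) (D - r) with hu_def
    set v : Set E := (closedBall (0 : E) r)ᶜ with hv_def
    have hu : IsOpen u := isOpen_ball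
    have hv : IsOpen v := Metric.isClosed_closedBall.isOpen_compl
    set S := closedBall (0 : E) r ∪ ⋃ k : Fin n, closedBall (ringPt D n k) r with hS_def
    have hsub : S ⊆ u ∪ v := by
      intro x _
      rcases le_or_gt (dist x 0) r with h | h
      · left
        rw [hu_def, mem_ball]
        linarith
      · right
        rw [hv_def, Set.mem_compl_iff, mem_closedBall]
        linarith
    have hne1 : (S ∩ u).Nonempty := by
      refine ⟨0, ?_, ?_⟩
      · left
        rw [mem_closedBall, dist_self]
        linarith
      · rw [hu_def, mem_ball, dist_self]
        linarith
    have hp0 : ‖ringPt D n 0‖ = D := norm_ringPt D hD.le n 0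
    have hne2 : (S ∩ v).Nonempty := by
      refine ⟨ringPt D n 0, ?_, ?_⟩
      · right
        refine Set.mem_iUnion.2 ⟨⟨0, by omega⟩, ?_⟩
        rw [mem_closedBall, dist_self]
        linarith
      · rw [hv_def, Set.mem_compl_iff, mem_closedBall, dist_zero_right, hp0]
        push_neg
        linarith
    obtain ⟨x, hxS, hxu, hxv⟩ := hC.isPreconnected u v hu hv hsub hne1 hne2
    rw [hu_def, mem_ball, dist_zero_right] at hxu
    rw [hv_def, Set.mem_compl_iff, mem_closedBall, dist_zero_right] at hxv
    push_neg at hxv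
    rcases hxS with h | h
    · rw [mem_closedBall, dist_zero_right] at h
      linarith
    · obtain ⟨k, hk⟩ := Set.mem_iUnion.1 h
      rw [mem_closedBall] at hk
      have hpk : ‖ringPt D n k‖ = D := norm_ringPt D hD.le n k
      have htri := dist_triangle (ringPt D n k) x (0 : E)
      rw [dist_zero_right, hpk, dist_comm] at htri
      rw [dist_zero_right] at htri
      linarith
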